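/- arXiv:1110.1674 — 2 statements merged into one kernel-verified Lean document; each statement's English description precedes it below -/
import Mathlib

section
/- Let m, n be coprime positive integers. Write (1 + z²u_2 + ... + z^n u_n)^{m/n} = ∑_{k≥0} w_k z^k (binomial series over ℚ[u_2,...,u_n]), and let J_{m/n} ⊂ ℚ[u_2,...,u_n] be the ideal generated by {w_k : k ≥ m+1}. Then the equations obtained by eliminating v_2,...,v_m from the system (1 + z²u_2+...+z^n u_n)^m = (1 + z²v_2+...+z^m v_m)^n (coefficientwise in z) generate J_{m/n}: explicitly, setting v_j = w_j for 2 ≤ j ≤ m, the coefficient of z^k for k > m in (1+z²u_2+...+z^n u_n)^m - (1+z²v_2+...+z^m v_m)^n lies in J_{m/n}, and conversely each w_k for k > m lies in the ideal generated by these coefficients. -/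
open PowerSeries Finset

/-- Generalized binomial coefficient `C(α, j) = α(α-1)⋯(α-j+1)/j!`. -/
noncomputable def gbinom (α : ℚ) (j : ℕ) : ℚ :=
  (∏ i ∈ Finset.range j, (α - i)) / (j.factorial : ℚ)

/-- The binomial series `(1 + w)^α = ∑_j C(α,j) w^j`, for a power series `w`
(intended to have zero constant term, so that each coefficient is a finite sum). -/
noncomputable def fpow {R : Type*} [CommRing R] [Algebra ℚ R]
    (w : PowerSeries R) (α : ℚ) : PowerSeries R :=
  PowerSeries.mk fun k => ∑ j ∈ Finset.range (k + 1),
    gbinom α j • (PowerSeries.coeff (R := R) k (w ^ j))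

lemma gbinom_zero_right (α : ℚ) : gbinom α 0 = 1 := by simp [gbinom]

lemma desc_smeval_eq_prod (α : ℚ) (j : ℕ) :
    (descPochhammer ℤ j).smeval α = ∏ i ∈ Finset.range j, (α - i) := by
  induction j with
  | zero => simp [descPochhammer_zero, Polynomial.smeval_one]
  | succ j ih =>
    rw [descPochhammer_succ_right, Polynomial.smeval_mul, ih, Finset.prod_range_succ,
      Polynomial.smeval_sub, Polynomial.smeval_X, Polynomial.smeval_natCast]
    ring

lemma gbinom_eq_choose (α : ℚ) (j : ℕ) : gbinom α j = Ring.choose α j := by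
  have h := Ring.descPochhammer_eq_factorial_smul_choose α j
  rw [desc_smeval_eq_prod] at h
  rw [gbinom, h, nsmul_eq_mul]
  field_simp [Nat.factorial_ne_zero]

lemma gbinom_add (α β : ℚ) (k : ℕ) :
    gbinom (α + β) k = ∑ ij ∈ Finset.HasAntidiagonal.antidiagonal k, gbinom α ij.1 * gbinom β ij.2 := by
  simp only [gbinom_eq_choose]
  exact Ring.add_choose_eq k (Commute.all α β)

lemma gbinom_natCast (t j : ℕ) : gbinom (t : ℚ) j = (t.choose j : ℚ) := by
  rw [gbinom_eq_choose, Ring.choose_natCast]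

lemma coeff_pow_W {A : Type*} [CommRing A] (W : PowerSeries A)
    (hW0 : constantCoeff W = 0) {j k : ℕ} (h : k < j) :
    coeff k (W ^ j) = 0 := by
  have hx : (X : A⟦X⟧) ∣ W := X_dvd_iff.mpr hW0
  have : (X : A⟦X⟧) ^ j ∣ W ^ j := pow_dvd_pow_of_dvd hx j
  exact (X_pow_dvd_iff.mp this) k h

lemma coeff_fpow {A : Type*} [CommRing A] [Algebra ℚ A] (W : PowerSeries A) (α : ℚ) (k : ℕ) :
    coeff k (fpow W α) = ∑ j ∈ range (k + 1), gbinom α j • coeff k (W ^ j) := by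
  simp [fpow, coeff_mk]

lemma coeff_fpow' {A : Type*} [CommRing A] [Algebra ℚ A] (W : PowerSeries A)
    (hW0 : constantCoeff W = 0) (α : ℚ) (k N : ℕ) (hN : k < N) :
    coeff k (fpow W α) = ∑ j ∈ range N, gbinom α j • coeff k (W ^ j) := by
  rw [coeff_fpow]
  apply Finset.sum_subset
  · intro x hx; simp only [mem_range] at *; omega
  · intro x _ hx
    simp only [mem_range, not_lt] at hx
    rw [coeff_pow_W W hW0 (by omega), smul_zero]

lemma fpow_mul {A : Type*} [CommRing A] [Algebra ℚ A] (W : PowerSeries A)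
    (hW0 : constantCoeff W = 0) (α β : ℚ) :
    fpow W α * fpow W β = fpow W (α + β) := by
  ext k
  rw [coeff_mul]
  set F : ℕ × ℕ → A := fun p => (gbinom α p.1 * gbinom β p.2) • coeff k (W ^ (p.1 + p.2))
    with hF
  have lhs : ∑ p ∈ antidiagonal k, coeff p.1 (fpow W α) * coeff p.2 (fpow W β)
      = ∑ p ∈ range (k+1) ×ˢ range (k+1), F p := by
    have h1 : ∀ p ∈ antidiagonal k, coeff p.1 (fpow W α) * coeff p.2 (fpow W β)
        = ∑ a ∈ range (k+1), ∑ b ∈ range (k+1),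
            (gbinom α a * gbinom β b) • (coeff p.1 (W^a) * coeff p.2 (W^b)) := by
      intro p hp
      rw [Finset.HasAntidiagonal.mem_antidiagonal] at hp
      rw [coeff_fpow' W hW0 α p.1 (k+1) (by omega), coeff_fpow' W hW0 β p.2 (k+1) (by omega),
        Finset.sum_mul_sum]
      exact sum_congr rfl fun a _ => sum_congr rfl fun b _ => smul_mul_smul_comm _ _ _ _
    rw [Finset.sum_congr rfl h1, Finset.sum_comm]
    rw [Finset.sum_product]
    refine sum_congr rfl fun a _ => ?_
    rw [Finset.sum_comm]
    refine sum_congr rfl fun b _ => ?_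
    rw [← Finset.smul_sum, ← coeff_mul, ← pow_add]
  rw [lhs, coeff_fpow]
  have rhs : ∑ j ∈ range (k + 1), gbinom (α+β) j • coeff k (W ^ j)
      = ∑ p ∈ (range (k+1)).biUnion antidiagonal, F p := by
    rw [Finset.sum_biUnion]
    · refine sum_congr rfl fun l hl => ?_
      rw [gbinom_add, Finset.sum_smul]
      refine sum_congr rfl fun p hp => ?_
      rw [Finset.HasAntidiagonal.mem_antidiagonal] at hp
      rw [hF]; simp only [hp]
    · intro x _ y _ hxy
      simp only [Finset.disjoint_left]
      intro p hpx hpy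
      rw [Finset.HasAntidiagonal.mem_antidiagonal] at hpx hpy
      exact hxy (hpx.symm.trans hpy)
  rw [rhs]
  refine (Finset.sum_subset ?_ ?_).symm
  · intro p hp
    simp only [Finset.mem_biUnion, Finset.HasAntidiagonal.mem_antidiagonal, mem_range] at hp
    obtain ⟨l, hl, rfl⟩ := hp
    simp only [mem_product, mem_range]
    omega
  · intro p hp hnp
    simp only [mem_product, mem_range] at hp
    simp only [Finset.mem_biUnion, Finset.HasAntidiagonal.mem_antidiagonal, mem_range] at hnp
    have : k < p.1 + p.2 := by
      by_contra h
      exact hnp ⟨p.1 + p.2, by omega, rfl⟩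
    rw [hF]; simp only
    rw [coeff_pow_W W hW0 this, smul_zero]

lemma fpow_natCast {A : Type*} [CommRing A] [Algebra ℚ A] (W : PowerSeries A)
    (hW0 : constantCoeff W = 0) (t : ℕ) : fpow W (t : ℚ) = (1 + W) ^ t := by
  ext k
  set f : ℕ → A := fun j => (t.choose j : ℚ) • coeff k (W ^ j) with hf
  have hzero : ∀ j ∈ range (k + t + 1), j ∉ range (k+1) → f j = 0 := by
    intro j _ hj
    simp only [mem_range, not_lt] at hj
    rw [hf]; simp only
    rw [coeff_pow_W W hW0 (by omega), smul_zero]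
  have hzero' : ∀ j ∈ range (k + t + 1), j ∉ range (t+1) → f j = 0 := by
    intro j _ hj
    simp only [mem_range, not_lt] at hj
    rw [hf]; simp only
    rw [Nat.choose_eq_zero_of_lt (by omega), Nat.cast_zero, zero_smul]
  have h1 : coeff k (fpow W (t : ℚ)) = ∑ j ∈ range (k + t + 1), f j := by
    rw [coeff_fpow]
    have hc : ∀ j ∈ range (k+1), gbinom (t:ℚ) j • coeff k (W^j) = f j :=
      fun j _ => by rw [hf]; simp only [gbinom_natCast]
    rw [Finset.sum_congr rfl hc]
    exact Finset.sum_subset (fun x hx => by simp only [mem_range] at *; omega) hzero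
  have h2 : coeff k ((1 + W) ^ t) = ∑ j ∈ range (k + t + 1), f j := by
    rw [add_comm (1 : A⟦X⟧) W, add_pow]
    rw [← Finset.sum_subset (fun x hx => by simp only [mem_range] at *; omega) hzero']
    rw [map_sum]
    refine sum_congr rfl fun j _ => ?_
    rw [one_pow, mul_one, hf]
    simp only
    rw [Nat.cast_smul_eq_nsmul, ← map_nsmul, nsmul_eq_mul, mul_comm]
  rw [h1, h2]

lemma fpow_pow {A : Type*} [CommRing A] [Algebra ℚ A] (W : PowerSeries A)
    (hW0 : constantCoeff W = 0) (α : ℚ) (t : ℕ) :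
    (fpow W α) ^ t = fpow W (t * α) := by
  induction t with
  | zero =>
    rw [pow_zero, Nat.cast_zero, zero_mul]
    have h := fpow_natCast W hW0 0
    rw [Nat.cast_zero, pow_zero] at h
    exact h.symm
  | succ t ih =>
    rw [pow_succ, ih, fpow_mul W hW0]
    congr 1
    push_cast
    ring

/-- Elimination of the `v`-variables: with `w_k = Coef_k[(1+z²u₂+⋯+zⁿuₙ)^{m/n}]` and
`J_{m/n} = (w_k : k ≥ m+1)`, substituting `v_j = w_j` in
`(1+z²u₂+⋯+zⁿuₙ)^m - (1+z²v₂+⋯+z^m v_m)^n`, every `z`-coefficient of degree `> m`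
lies in `J_{m/n}`, and conversely each `w_k`, `k > m`, lies in the ideal generated by
these coefficients.  The variable `X i` of `ℚ[Fin (n-1)]` stands for `u_{i+2}`. -/
theorem eliminate_v (m n : ℕ) (hm : 0 < m) (hn : 0 < n) (hmn : Nat.Coprime m n)
    (W : PowerSeries (MvPolynomial (Fin (n - 1)) ℚ))
    (hW : W = ∑ i : Fin (n - 1),
      PowerSeries.C (R := MvPolynomial (Fin (n - 1)) ℚ) (MvPolynomial.X i) *
        PowerSeries.X ^ ((i : ℕ) + 2))
    (w : ℕ → MvPolynomial (Fin (n - 1)) ℚ)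
    (hw : ∀ k, w k = PowerSeries.coeff k (fpow W ((m : ℚ) / n)))
    (J : Ideal (MvPolynomial (Fin (n - 1)) ℚ))
    (hJ : J = Ideal.span {g | ∃ k, m + 1 ≤ k ∧ g = w k})
    (D : PowerSeries (MvPolynomial (Fin (n - 1)) ℚ))
    (hD : D = (1 + W) ^ m -
      (1 + ∑ j ∈ Finset.Icc 2 m,
        PowerSeries.C (R := MvPolynomial (Fin (n - 1)) ℚ) (w j) * PowerSeries.X ^ j) ^ n) :
    (∀ k, m < k → PowerSeries.coeff k D ∈ J) ∧
    (∀ k, m < k →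
      w k ∈ Ideal.span {g | ∃ k', m < k' ∧ g = PowerSeries.coeff k' D}) := by
  have hWlow : ∀ k < 2, coeff k W = 0 := by
    intro k hk
    rw [hW, map_sum]
    refine Finset.sum_eq_zero fun i _ => ?_
    rw [coeff_C_mul, coeff_X_pow, if_neg (by omega), mul_zero]
  have hW0 : constantCoeff W = 0 := by
    rw [← coeff_zero_eq_constantCoeff]; exact hWlow 0 (by norm_num)
  set α : ℚ := (m : ℚ) / n with hα
  set F := fpow W α with hFdef
  have hnQ : (n : ℚ) ≠ 0 := Nat.cast_ne_zero.mpr hn.ne'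
  have hFn : F ^ n = (1 + W) ^ m := by
    rw [hFdef, fpow_pow W hW0 α n, hα, mul_div_cancel₀ _ hnQ, fpow_natCast W hW0 m]
  have hw0 : w 0 = 1 := by
    rw [hw, hFdef, coeff_fpow]
    simp [gbinom_zero_right]
  have hw1 : w 1 = 0 := by
    rw [hw, hFdef, coeff_fpow]
    rw [Finset.sum_range_succ, Finset.sum_range_one, pow_zero, pow_one]
    rw [hWlow 1 (by norm_num)]
    simp
  set T := 1 + ∑ j ∈ Finset.Icc 2 m,
      PowerSeries.C (R := MvPolynomial (Fin (n - 1)) ℚ) (w j) * PowerSeries.X ^ j with hTdef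
  have hT : ∀ k, coeff k T =
      (if k = 0 then 1 else 0) + (if k ∈ Finset.Icc 2 m then w k else 0) := by
    intro k
    rw [hTdef, map_add, map_sum, coeff_one]
    congr 1
    rw [Finset.sum_congr rfl (fun j _ => by
      rw [coeff_C_mul, coeff_X_pow, mul_ite, mul_one, mul_zero])]
    simp
  set R := F - T with hRdef
  have hwF : ∀ k, w k = coeff k F := hw
  have hRlow : ∀ k ≤ m, coeff k R = 0 := by
    intro k hk
    rw [hRdef, map_sub, hT k, ← hwF k]
    rcases Nat.lt_or_ge k 2 with h2 | h2
    · interval_cases k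
      · simp [hw0]
      · simp [hw1]
    · rw [if_neg (by omega), if_pos (by simp; omega), zero_add, sub_self]
  have hRhigh : ∀ k, m < k → coeff k R = w k := by
    intro k hk
    rw [hRdef, map_sub, hT k, ← hwF k, if_neg (by omega), if_neg (by simp; omega)]
    ring
  set G := ∑ i ∈ range n, F ^ i * T ^ (n - 1 - i) with hGdef
  have hD' : D = G * R := by
    rw [hGdef, hRdef, geom_sum₂_mul, hFn, hD, hTdef]
  have hG0 : constantCoeff G = (n : MvPolynomial (Fin (n - 1)) ℚ) := by
    have hF0 : constantCoeff F = 1 := by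
      rw [← coeff_zero_eq_constantCoeff, ← hwF 0, hw0]
    have hT0 : constantCoeff T = 1 := by
      rw [← coeff_zero_eq_constantCoeff, hT 0]
      simp [hm]
    rw [hGdef, map_sum]
    rw [Finset.sum_congr rfl (fun i _ => by rw [map_mul, map_pow, map_pow, hF0, hT0, one_pow,
      one_pow, one_mul])]
    simp
  constructor
  · intro k hk
    rw [hD', coeff_mul, hJ]
    refine Ideal.sum_mem _ fun p hp => ?_
    rcases Nat.lt_or_ge m p.2 with h2 | h2
    · rw [hRhigh p.2 h2]
      exact Ideal.mul_mem_left _ _ (Ideal.subset_span ⟨p.2, by omega, rfl⟩)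
    · rw [hRlow p.2 h2, mul_zero]
      exact Ideal.zero_mem _
  · intro k
    induction k using Nat.strong_induction_on with
    | _ k IH =>
      intro hk
      set K := Ideal.span {g | ∃ k', m < k' ∧ g = PowerSeries.coeff k' D} with hK
      have hmem : (0, k) ∈ Finset.HasAntidiagonal.antidiagonal k := by simp
      have hsplit : coeff k D = coeff 0 G * coeff k R +
          ∑ p ∈ (Finset.HasAntidiagonal.antidiagonal k).erase (0, k),
            coeff p.1 G * coeff p.2 R := by
        rw [hD', coeff_mul]
        rw [Finset.add_sum_erase _
          (fun p => coeff p.1 G * coeff p.2 R) hmem]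
      have hrest : ∑ p ∈ (Finset.HasAntidiagonal.antidiagonal k).erase (0, k),
          coeff p.1 G * coeff p.2 R ∈ K := by
        refine Ideal.sum_mem _ fun p hp => ?_
        have hpk : p.2 < k := by
          rw [Finset.mem_erase, Finset.HasAntidiagonal.mem_antidiagonal] at hp
          rcases Nat.lt_or_ge p.2 k with h | h
          · exact h
          · exfalso; apply hp.1
            have h1 : p.2 = k := by omega
            have h0 : p.1 = 0 := by omega
            rw [← h1, ← h0]
        rcases Nat.lt_or_ge m p.2 with h2 | h2
        · rw [hRhigh p.2 h2]
          exact Ideal.mul_mem_left _ _ (IH p.2 hpk h2)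
        · rw [hRlow p.2 h2, mul_zero]
          exact Ideal.zero_mem _
      have hnk : (n : MvPolynomial (Fin (n - 1)) ℚ) * w k ∈ K := by
        have h1 : (n : MvPolynomial (Fin (n - 1)) ℚ) * w k = coeff k D -
            ∑ p ∈ (Finset.HasAntidiagonal.antidiagonal k).erase (0, k),
              coeff p.1 G * coeff p.2 R := by
          rw [hsplit, coeff_zero_eq_constantCoeff, hG0, hRhigh k hk]
          ring
        rw [h1]
        exact Ideal.sub_mem _ (Ideal.subset_span ⟨k, hk, rfl⟩) hrest
      have h2 : w k = (MvPolynomial.C ((n : ℚ)⁻¹) : MvPolynomial (Fin (n - 1)) ℚ) * ((n : MvPolynomial (Fin (n - 1)) ℚ) * w k) := by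
        rw [← mul_assoc, ← map_natCast (MvPolynomial.C : ℚ →+* MvPolynomial (Fin (n - 1)) ℚ) n, ← map_mul,
          inv_mul_cancel₀ hnQ, map_one, one_mul]
      rw [h2]
      exact Ideal.mul_mem_left _ _ hnk
end

section
/- Let m, n be coprime, F(z) = ∏_{i=1}^n (1-z x_i)^{m/n} = ∑ v_k z^k over ℂ[x_1,...,x_n], B_i(z) = F(z)/(1-z x_i), and f_i = Coef_m[B_i(z)]. Let I be the ideal of ℂ[x_1,...,x_n] generated by f_1,...,f_n together with v_{m+1},...,v_{m+n-1}. Then Coef_k[B_i(z)] ∈ I for every k ≥ m and every i. -/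
open PowerSeries

lemma gbinom_succ (α : ℚ) (j : ℕ) :
    (j + 1 : ℚ) * gbinom α (j + 1) = (α - j) * gbinom α j := by
  unfold gbinom
  rw [Finset.prod_range_succ, Nat.factorial_succ]
  have h1 : (j.factorial : ℚ) ≠ 0 := Nat.cast_ne_zero.mpr j.factorial_ne_zero
  have h2 : ((j : ℚ) + 1) ≠ 0 := by positivity
  push_cast
  field_simp

lemma coeff_fpow_s13 {R : Type*} [CommRing R] [Algebra ℚ R] (c : R) (α : ℚ) (k : ℕ) :
    PowerSeries.coeff (R := R) k (fpow (PowerSeries.C (R := R) c * PowerSeries.X) α)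
      = gbinom α k • c ^ k := by
  unfold fpow
  rw [coeff_mk]
  rw [Finset.sum_eq_single k]
  · rw [mul_pow, ← map_pow, coeff_C_mul, coeff_X_pow, if_pos rfl, mul_one]
  · intro j hj hne
    rw [mul_pow, ← map_pow, coeff_C_mul, coeff_X_pow, if_neg (Ne.symm hne), mul_zero, smul_zero]
  · intro h; exact absurd (Finset.self_mem_range_succ k) h

lemma deriv_prod {R : Type*} [CommRing R] {ι : Type*} [DecidableEq ι] (s : Finset ι)
    (G : ι → PowerSeries R) :
    d⁄dX R (∏ j ∈ s, G j) = ∑ j ∈ s, (∏ l ∈ s.erase j, G l) * d⁄dX R (G j) := by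
  induction s using Finset.induction_on with
  | empty => simp
  | @insert a s ha ih =>
    have h2 : ∑ j ∈ s, (∏ l ∈ (insert a s).erase j, G l) * d⁄dX R (G j)
        = ∑ j ∈ s, G a * ((∏ l ∈ s.erase j, G l) * d⁄dX R (G j)) :=
      Finset.sum_congr rfl (fun j hj => by
        rw [Finset.erase_insert_of_ne (by rintro rfl; exact ha hj),
          Finset.prod_insert (fun h => ha (Finset.mem_of_mem_erase h)), mul_assoc])
    rw [Finset.prod_insert ha, Derivation.leibniz, smul_eq_mul, smul_eq_mul,
      Finset.sum_insert ha, Finset.erase_insert ha, ih, h2, ← Finset.mul_sum]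
    ring

lemma fpow_ode {R : Type*} [CommRing R] [Algebra ℚ R] (c : R) (α : ℚ) :
    (1 + PowerSeries.C (R := R) c * PowerSeries.X) * d⁄dX R (fpow (PowerSeries.C (R := R) c * PowerSeries.X) α)
      = α • (PowerSeries.C (R := R) c * fpow (PowerSeries.C (R := R) c * PowerSeries.X) α) := by
  set G := fpow (PowerSeries.C (R := R) c * PowerSeries.X) α with hG
  have hc : ∀ j : ℕ, PowerSeries.coeff (R := R) j G = algebraMap ℚ R (gbinom α j) * c ^ j := by
    intro j; rw [hG, coeff_fpow_s13, Algebra.smul_def]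
  have hnat : ∀ j : ℕ, algebraMap ℚ R ((j : ℚ)) = (j : R) := fun j => map_natCast _ j
  have hd : ∀ j : ℕ, PowerSeries.coeff (R := R) j (d⁄dX R G)
      = algebraMap ℚ R (((j : ℚ) + 1) * gbinom α (j+1)) * c ^ (j+1) := by
    intro j
    rw [PowerSeries.coeff_derivative, hc (j+1), map_mul, map_add, hnat, map_one]
    ring
  have hmul : (1 + PowerSeries.C (R := R) c * PowerSeries.X) * d⁄dX R G
      = d⁄dX R G + PowerSeries.C (R := R) c * (d⁄dX R G * PowerSeries.X) := by ring
  ext k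
  rw [hmul, map_add, PowerSeries.coeff_smul, coeff_C_mul, coeff_C_mul, Algebra.smul_def]
  cases k with
  | zero =>
    rw [PowerSeries.coeff_zero_mul_X, mul_zero, add_zero, hd, hc]
    have g1 : gbinom α 1 = α := by simp [gbinom]
    have g0 : gbinom α 0 = 1 := by simp [gbinom]
    rw [g1, g0, map_mul, map_add, map_one]
    simp only [map_natCast, Nat.cast_zero, zero_add, map_one, map_zero]
    ring
  | succ k =>
    rw [PowerSeries.coeff_succ_mul_X, hd, hd, hc]
    have key := gbinom_succ α (k+1)
    push_cast at key
    have keyR := congrArg (algebraMap ℚ R) key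
    simp only [map_mul, map_add, map_sub, map_one, map_natCast] at keyR ⊢
    push_cast
    linear_combination (c ^ (k+2)) * keyR

lemma smul_eq_C_mul'' {R : Type*} [CommRing R] [Algebra ℚ R] (q : ℚ) (φ : PowerSeries R) :
    q • φ = PowerSeries.C (R := R) (algebraMap ℚ R q) * φ := by
  ext k
  rw [PowerSeries.coeff_smul, coeff_C_mul, Algebra.smul_def]

/-- Let `I` be the ideal generated by `f₁,…,fₙ` and `v_{m+1},…,v_{m+n-1}`.
Then `Coef_k[B_i(z)] ∈ I` for every `k ≥ m` and every `i`. -/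
theorem coeff_B_mem_ideal (m n : ℕ) (hm : 0 < m) (hn : 0 < n) (hmn : Nat.Coprime m n)
    (F : PowerSeries (MvPolynomial (Fin n) ℂ))
    (hF : F = ∏ j : Fin n,
      fpow (-(PowerSeries.C (R := MvPolynomial (Fin n) ℂ) (MvPolynomial.X j) * PowerSeries.X))
        ((m : ℚ) / n))
    (v : ℕ → MvPolynomial (Fin n) ℂ) (hv : ∀ k, v k = PowerSeries.coeff k F)
    (B : Fin n → PowerSeries (MvPolynomial (Fin n) ℂ))
    (hB : ∀ i, B i = PowerSeries.invOfUnit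
      (1 - PowerSeries.C (R := MvPolynomial (Fin n) ℂ) (MvPolynomial.X i) * PowerSeries.X) 1 * F)
    (f : Fin n → MvPolynomial (Fin n) ℂ) (hf : ∀ i, f i = PowerSeries.coeff m (B i))
    (I : Ideal (MvPolynomial (Fin n) ℂ))
    (hI : I = Ideal.span
      ({g | ∃ i, g = f i} ∪ {g | ∃ j, 1 ≤ j ∧ j ≤ n - 1 ∧ g = v (m + j)})) :
    ∀ (k : ℕ), m ≤ k → ∀ i : Fin n, PowerSeries.coeff k (B i) ∈ I := by
  classical
  set α : ℚ := (m : ℚ) / n with hα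
  set G : Fin n → PowerSeries (MvPolynomial (Fin n) ℂ) := fun j =>
    fpow (-(PowerSeries.C (R := MvPolynomial (Fin n) ℂ) (MvPolynomial.X j) * PowerSeries.X)) α with hGdef
  set u : Fin n → PowerSeries (MvPolynomial (Fin n) ℂ) := fun i =>
    1 - PowerSeries.C (R := MvPolynomial (Fin n) ℂ) (MvPolynomial.X i) * PowerSeries.X with hu
  have hunit : ∀ i, PowerSeries.constantCoeff (R := MvPolynomial (Fin n) ℂ) (u i) = ((1 : (MvPolynomial (Fin n) ℂ)ˣ) : MvPolynomial (Fin n) ℂ) := by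
    intro i
    simp [hu]
  have hinv : ∀ i, u i * PowerSeries.invOfUnit (u i) 1 = 1 := fun i =>
    PowerSeries.mul_invOfUnit (u i) 1 (hunit i)
  have huB : ∀ i, u i * B i = F := by
    intro i
    rw [hB i, ← mul_assoc, hinv i, one_mul]
  have hrecB : ∀ (i : Fin n) (k : ℕ),
      PowerSeries.coeff (R := MvPolynomial (Fin n) ℂ) (k+1) (B i)
        = v (k+1) + MvPolynomial.X i * PowerSeries.coeff (R := MvPolynomial (Fin n) ℂ) k (B i) := by
    intro i k
    have e : u i * B i = B i - PowerSeries.C (R := MvPolynomial (Fin n) ℂ) (MvPolynomial.X i) * (B i * PowerSeries.X) := by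
      simp only [hu]; ring
    have h := congrArg (PowerSeries.coeff (R := MvPolynomial (Fin n) ℂ) (k+1)) (huB i)
    rw [e, map_sub, coeff_C_mul, PowerSeries.coeff_succ_mul_X, ← hv (k+1)] at h
    linear_combination h
  have hGj : ∀ j, G j = fpow (PowerSeries.C (R := MvPolynomial (Fin n) ℂ) (- MvPolynomial.X j) * PowerSeries.X) α := by
    intro j
    simp only [hGdef]
    congr 1
    rw [map_neg, neg_mul]
  have hdF : d⁄dX (MvPolynomial (Fin n) ℂ) F = ∑ j : Fin n,
      (-α) • (PowerSeries.C (R := MvPolynomial (Fin n) ℂ) (MvPolynomial.X j) * B j) := by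
    have hFP : F = ∏ j : Fin n, G j := hF
    rw [hFP, deriv_prod]
    apply Finset.sum_congr rfl
    intro j _
    have hode := fpow_ode (R := MvPolynomial (Fin n) ℂ) (- MvPolynomial.X j) α
    rw [← hGj j] at hode
    have hode' : u j * d⁄dX (MvPolynomial (Fin n) ℂ) (G j)
        = α • (PowerSeries.C (R := MvPolynomial (Fin n) ℂ) (- MvPolynomial.X j) * G j) := by
      have h1 : u j
          = 1 + PowerSeries.C (R := MvPolynomial (Fin n) ℂ) (- MvPolynomial.X j) * PowerSeries.X := by
        simp only [hu]; rw [map_neg, neg_mul]; ring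
      rw [h1, hode]
    have hprod : G j * ∏ l ∈ Finset.univ.erase j, G l = F := by
      rw [hFP]; exact Finset.mul_prod_erase Finset.univ G (Finset.mem_univ j)
    have hBj : B j = PowerSeries.invOfUnit (u j) 1 * F := hB j
    set iv := PowerSeries.invOfUnit (u j) 1 with hiv
    rw [smul_eq_C_mul''] at hode'
    rw [smul_eq_C_mul'']
    calc (∏ l ∈ Finset.univ.erase j, G l) * d⁄dX (MvPolynomial (Fin n) ℂ) (G j)
        = (∏ l ∈ Finset.univ.erase j, G l) * (u j * d⁄dX (MvPolynomial (Fin n) ℂ) (G j)) * iv := by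
          have h3 : (∏ l ∈ Finset.univ.erase j, G l) *
                (u j * d⁄dX (MvPolynomial (Fin n) ℂ) (G j)) * iv
              = ((∏ l ∈ Finset.univ.erase j, G l) * d⁄dX (MvPolynomial (Fin n) ℂ) (G j)) *
                (u j * iv) := by ring
          rw [h3, hinv j, mul_one]
      _ = (∏ l ∈ Finset.univ.erase j, G l) *
            (PowerSeries.C (R := MvPolynomial (Fin n) ℂ) (algebraMap ℚ (MvPolynomial (Fin n) ℂ) α) *
              (PowerSeries.C (R := MvPolynomial (Fin n) ℂ) (- MvPolynomial.X j) * G j)) * iv := by rw [hode']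
      _ = PowerSeries.C (R := MvPolynomial (Fin n) ℂ) (algebraMap ℚ (MvPolynomial (Fin n) ℂ) α) * (PowerSeries.C (R := MvPolynomial (Fin n) ℂ) (- MvPolynomial.X j) *
            (iv * (G j * ∏ l ∈ Finset.univ.erase j, G l))) := by ring
      _ = PowerSeries.C (R := MvPolynomial (Fin n) ℂ) (algebraMap ℚ (MvPolynomial (Fin n) ℂ) α) *
            (PowerSeries.C (R := MvPolynomial (Fin n) ℂ) (- MvPolynomial.X j) * B j) := by rw [hprod, ← hBj]
      _ = PowerSeries.C (R := MvPolynomial (Fin n) ℂ) (algebraMap ℚ (MvPolynomial (Fin n) ℂ) (-α)) *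
            (PowerSeries.C (R := MvPolynomial (Fin n) ℂ) (MvPolynomial.X j) * B j) := by
          simp only [map_neg]; ring
  have hvk : ∀ k : ℕ, v (k+1) * ((k : MvPolynomial (Fin n) ℂ) + 1) = ∑ j : Fin n,
      algebraMap ℚ (MvPolynomial (Fin n) ℂ) (-α) * (MvPolynomial.X j * PowerSeries.coeff (R := MvPolynomial (Fin n) ℂ) k (B j)) := by
    intro k
    have h := congrArg (PowerSeries.coeff (R := MvPolynomial (Fin n) ℂ) k) hdF
    rw [PowerSeries.coeff_derivative, map_sum] at h
    rw [hv (k+1), h]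
    apply Finset.sum_congr rfl
    intro j _
    rw [smul_eq_C_mul'', coeff_C_mul, coeff_C_mul]
  intro k hk
  induction k, hk using Nat.le_induction with
  | base =>
    intro i
    rw [← hf i, hI]
    exact Ideal.subset_span (Or.inl ⟨i, rfl⟩)
  | succ k hk IH =>
    intro i
    have hvI : v (k+1) ∈ I := by
      have hsum : (∑ j : Fin n,
          algebraMap ℚ (MvPolynomial (Fin n) ℂ) (-α) * (MvPolynomial.X j * PowerSeries.coeff (R := MvPolynomial (Fin n) ℂ) k (B j))) ∈ I :=
        Ideal.sum_mem _ (fun j _ => Ideal.mul_mem_left _ _ (Ideal.mul_mem_left _ _ (IH j)))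
      have hone : algebraMap ℚ (MvPolynomial (Fin n) ℂ) (1/((k : ℚ)+1)) * ((k : MvPolynomial (Fin n) ℂ) + 1) = 1 := by
        have h2 : ((k : MvPolynomial (Fin n) ℂ) + 1) = algebraMap ℚ (MvPolynomial (Fin n) ℂ) ((k : ℚ) + 1) := by
          rw [map_add, map_natCast, map_one]
        rw [h2, ← map_mul, one_div, inv_mul_cancel₀ (by positivity), map_one]
      have hv1 : v (k+1) = algebraMap ℚ (MvPolynomial (Fin n) ℂ) (1/((k : ℚ)+1)) * (v (k+1) * ((k : MvPolynomial (Fin n) ℂ) + 1)) := by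
        calc v (k+1) = v (k+1) * (algebraMap ℚ (MvPolynomial (Fin n) ℂ) (1/((k : ℚ)+1)) * ((k : MvPolynomial (Fin n) ℂ) + 1)) := by
              rw [hone, mul_one]
          _ = algebraMap ℚ (MvPolynomial (Fin n) ℂ) (1/((k : ℚ)+1)) * (v (k+1) * ((k : MvPolynomial (Fin n) ℂ) + 1)) := by ring
      rw [hv1, hvk k]
      exact Ideal.mul_mem_left _ _ hsum
    rw [hrecB i k]
    exact Ideal.add_mem _ hvI (Ideal.mul_mem_left _ _ (IH i))
end
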